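/- Let A be a positive integer and let b = -A + i or b = -A - i. Let (w_n)_{n≥0} be a sequence of positive integers with w₀ ≥ 5 and w_{n+1} ≥ 2·w_n + 1 for all n ≥ 0, and let (ε_n)_{n≥0} be any sequence with ε_n ∈ {-1, 1} for all n. Then for every m ≥ 0, (1/2)·|b|^{-w_m} ≤ |∑_{j=m}^∞ ε_j·b^{-w_j}| ≤ (3/2)·|b|^{-w_m}. -/

import Mathlib

open Complex

theorem stmt7 (A : ℕ) (hA : 0 < A) (b : ℂ)
    (hb : b = -(A : ℂ) + I ∨ b = -(A : ℂ) - I)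
    (w : ℕ → ℕ) (hwpos : ∀ n, 0 < w n) (hw0 : 5 ≤ w 0)
    (hw : ∀ n, 2 * w n + 1 ≤ w (n + 1))
    (ε : ℕ → ℤ) (hε : ∀ n, ε n = 1 ∨ ε n = -1) (m : ℕ) :
    (1 / 2) * ‖b‖ ^ (-(w m : ℤ))
        ≤ ‖∑' j : ℕ, (ε (j + m) : ℂ) * b ^ (-(w (j + m) : ℤ))‖ ∧
      ‖∑' j : ℕ, (ε (j + m) : ℂ) * b ^ (-(w (j + m) : ℤ))‖
        ≤ (3 / 2) * ‖b‖ ^ (-(w m : ℤ)) := by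
  -- basic facts about |b|
  have hA1 : (1:ℝ) ≤ A := by exact_mod_cast hA
  have hsq : ‖b‖ ^ 2 = (A:ℝ)^2 + 1 := by
    rw [Complex.sq_norm]
    rcases hb with rfl | rfl <;> simp [Complex.normSq_apply] <;> ring
  have hC1 : 1 < ‖b‖ := by
    nlinarith [norm_nonneg b]
  have hC0 : 0 < ‖b‖ := lt_trans one_pos hC1
  set c : ℝ := (‖b‖)⁻¹ with hc_def
  have hc0 : 0 < c := inv_pos.mpr hC0
  have hc1 : c < 1 := inv_lt_one_of_one_lt₀ hC1
  have hc2 : c ^ 2 ≤ 1 / 2 := by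
    have h2 : (2:ℝ) ≤ ‖b‖ ^ 2 := by nlinarith
    have : c ^ 2 = (‖b‖ ^ 2)⁻¹ := by
      rw [hc_def, inv_pow]
    rw [this]
    rw [inv_le_iff_one_le_mul₀ (by positivity)]
    linarith
  have hc6 : c ^ 6 ≤ 1 / 8 := by
    have : c ^ 6 = (c ^ 2) ^ 3 := by ring
    rw [this]
    calc (c ^ 2) ^ 3 ≤ (1/2 : ℝ) ^ 3 := pow_le_pow_left₀ (sq_nonneg c) hc2 3
      _ = 1/8 := by norm_num
  -- abs of powers
  have habs_pow : ∀ n : ℕ, ‖b ^ (-(n:ℤ))‖ = c ^ n := by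
    intro n
    rw [norm_zpow, zpow_neg, zpow_natCast, hc_def, inv_pow]
  -- growth of w
  have hmono5 : ∀ n, 5 ≤ w n := by
    intro n
    induction n with
    | zero => exact hw0
    | succ k ih => have := hw k; omega
  have hwge : ∀ j, w m + 6 * j ≤ w (j + m) := by
    intro j
    induction j with
    | zero => simp
    | succ k ih =>
      have h1 := hw (k + m)
      have h2 := hmono5 (k + m)
      have : w (k + 1 + m) = w ((k + m) + 1) := by ring_nf
      omega
  -- the summand
  set f : ℕ → ℂ := fun j => (ε (j + m) : ℂ) * b ^ (-(w (j + m) : ℤ)) with hf_def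
  have habs_eps : ∀ n, ‖(ε n : ℂ)‖ = 1 := by
    intro n; rcases hε n with h | h <;> simp [h]
  have habsf : ∀ j, ‖f j‖ = c ^ (w (j + m)) := by
    intro j
    rw [hf_def]
    simp only [norm_mul, habs_eps, habs_pow, one_mul]
  have hboundf : ∀ j, ‖f j‖ ≤ c ^ (w m) * (1/8 : ℝ) ^ j := by
    intro j
    rw [habsf]
    calc c ^ (w (j + m)) ≤ c ^ (w m + 6 * j) :=
          pow_le_pow_of_le_one hc0.le hc1.le (hwge j)
      _ = c ^ (w m) * (c ^ 6) ^ j := by rw [pow_add, pow_mul]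
      _ ≤ c ^ (w m) * (1/8 : ℝ) ^ j := by
          apply mul_le_mul_of_nonneg_left _ (by positivity)
          exact pow_le_pow_left₀ (by positivity) hc6 j
  have hsumg : Summable (fun j : ℕ => c ^ (w m) * (1/8 : ℝ) ^ j) :=
    (summable_geometric_of_lt_one (by norm_num) (by norm_num)).mul_left _
  have hsumf : Summable f := by
    apply Summable.of_norm_bounded hsumg
    intro j
    exact hboundf j
  -- tail bound
  have htail : ‖(∑' j, f j) - f 0‖ ≤ (1/2) * c ^ (w m) := by
    have hsplit : (∑' j, f j) = f 0 + ∑' j, f (j + 1) := hsumf.tsum_eq_zero_add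
    rw [hsplit, add_sub_cancel_left]
    have hsum1 : Summable (fun j : ℕ => f (j + 1)) := by
      exact (summable_nat_add_iff (f := f) 1).mpr hsumf
    have hsumg1 : Summable (fun j : ℕ => c ^ (w m) * (1/8 : ℝ) ^ (j + 1)) := by
      exact (summable_nat_add_iff (f := fun j : ℕ => c ^ (w m) * (1/8 : ℝ) ^ j) 1).mpr hsumg
    have hsumabs : Summable (fun j : ℕ => ‖f (j + 1)‖) := by
      apply Summable.of_nonneg_of_le (fun j => norm_nonneg _)
        (fun j => hboundf (j + 1)) hsumg1
    calc ‖∑' j, f (j + 1)‖ ≤ ∑' j, ‖f (j + 1)‖ := by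
          have := norm_tsum_le_tsum_norm (f := fun j : ℕ => f (j + 1))
            (by simpa using hsumabs)
          simpa using this
      _ ≤ ∑' j : ℕ, c ^ (w m) * (1/8 : ℝ) ^ (j + 1) :=
          Summable.tsum_le_tsum (fun j => hboundf (j + 1)) hsumabs hsumg1
      _ = c ^ (w m) * (1/8) * ∑' j : ℕ, (1/8 : ℝ) ^ j := by
          rw [← tsum_mul_left]
          congr 1; ext j; ring
      _ = c ^ (w m) * (1/8) * (1 - 1/8)⁻¹ := by
          rw [tsum_geometric_of_lt_one (by norm_num) (by norm_num)]
      _ ≤ (1/2) * c ^ (w m) := by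
          rw [show ((1:ℝ) - 1/8)⁻¹ = 8/7 by norm_num]
          nlinarith [pow_pos hc0 (w m)]
  have habsf0 : ‖f 0‖ = c ^ (w m) := by
    rw [habsf]; norm_num
  have hgoalrw : ‖b‖ ^ (-(w m : ℤ)) = c ^ (w m) := by
    rw [zpow_neg, zpow_natCast, hc_def, inv_pow]
  rw [hgoalrw]
  constructor
  · have h1 : ‖f 0‖ - ‖(∑' j, f j) - f 0‖
        ≤ ‖∑' j, f j‖ := by
      have h3 := norm_add_le (∑' j, f j) (f 0 - ∑' j, f j)
      rw [show (∑' j, f j) + (f 0 - ∑' j, f j) = f 0 by ring,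
        norm_sub_rev] at h3
      linarith
    rw [habsf0] at h1
    linarith
  · calc ‖∑' j, f j‖
        ≤ ‖f 0‖ + ‖(∑' j, f j) - f 0‖ := by
          have := norm_add_le (f 0) ((∑' j, f j) - f 0)
          simpa using this
      _ ≤ (3/2) * c ^ (w m) := by rw [habsf0]; linarith
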